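/- Let w be a prefix normal binary word containing at least one 0 such that w1 is also prefix normal. Then w has a prefix normal parent v (a prefix normal word obtained from w by replacing one occurrence of 0 with 1) such that v1 is also prefix normal. -/

import Mathlib

/-- A binary word (list of booleans, `true` = letter 1) is prefix normal if every
factor has at most as many 1s as the prefix of the same length. -/
def prefixNormal (w : List Bool) : Prop :=
  ∀ v : List Bool, v <:+: w → v.count true ≤ (w.take v.length).count true

/-- The word chain of a permutation σ of positions (0-indexed): `pnChain σ 0 = 1^n`
and `pnChain σ (k+1)` flips position `σ k` of `pnChain σ k` from 1 to 0.
(`pnChain σ k` corresponds to the paper's `c_σ[k+1]`.) -/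
def pnChain {n : ℕ} (σ : Equiv.Perm (Fin n)) : ℕ → List Bool
  | 0 => List.replicate n true
  | k + 1 => if h : k < n then (pnChain σ k).set (σ ⟨k, h⟩) false else pnChain σ k

/-- σ is a prefix normal word chain generator iff every word of its chain is prefix normal. -/
def isPNGen {n : ℕ} (σ : Equiv.Perm (Fin n)) : Prop :=
  ∀ k ≤ n, prefixNormal (pnChain σ k)

private lemma count_set_le (l : List Bool) (j : ℕ) :
    (l.set j true).count true ≤ l.count true + 1 := by
  by_cases hj : j < l.length
  · rw [List.count_set (a := true) (b := true) hj]
    by_cases h : l[j] = true <;> simp [h] <;> omega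
  · rw [List.set_eq_of_length_le (by omega)]
    omega

private lemma le_count_set (l : List Bool) (j : ℕ) :
    l.count true ≤ (l.set j true).count true := by
  by_cases hj : j < l.length
  · rw [List.count_set (a := true) (b := true) hj]
    rcases Bool.eq_false_or_eq_true l[j] with h | h
    · have hpos : 0 < l.count true := List.count_pos_iff.2 (h ▸ List.getElem_mem hj)
      simp [h]
      omega
    · simp [h]
  · rw [List.set_eq_of_length_le (by omega)]

private lemma count_set_false (l : List Bool) (j : ℕ) (hj : j < l.length)
    (h : l[j] = false) : (l.set j true).count true = l.count true + 1 := by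
  rw [List.count_set (a := true) (b := true) hj]
  simp [h]

private lemma infix_set_count (l u : List Bool) (i : ℕ) (hu : u <:+: l.set i true) :
    ∃ u', u' <:+: l ∧ u'.length = u.length ∧ u.count true ≤ u'.count true + 1 := by
  obtain ⟨s, t, h⟩ := hu
  have hlen : s.length + (u.length + t.length) = l.length := by
    have h1 := congrArg List.length h
    simpa [List.length_append, List.length_set] using h1
  have hueq : u = ((l.set i true).drop s.length).take u.length := by
    have h1 : (l.set i true).drop s.length = u ++ t := by
      rw [← h, List.append_assoc, List.drop_left]
    rw [h1, List.take_left]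
  have hcnt : u.count true ≤ ((l.drop s.length).take u.length).count true + 1 := by
    conv_lhs => rw [hueq]
    rw [List.drop_set]
    split
    · exact Nat.le_succ _
    · rw [List.take_set]
      exact count_set_le _ _
  refine ⟨(l.drop s.length).take u.length,
    ((List.take_prefix _ _).isInfix).trans ((List.drop_suffix _ _).isInfix), ?_, hcnt⟩
  simp [List.length_take, List.length_drop]
  omega

private lemma prefixNormal_of_append (x : List Bool) (c : Bool)
    (h : prefixNormal (x ++ [c])) : prefixNormal x := by
  intro v hv
  have h1 : v <:+: x ++ [c] := hv.trans ((List.prefix_append x [c]).isInfix)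
  have h2 := h v h1
  rwa [List.take_append_of_le_length hv.length_le] at h2

/-- If `w1` is prefix normal (and `w` contains a 0), then `w` has a prefix normal
parent `v` such that `v1` is also prefix normal. -/
theorem exists_parent_extension (w : List Bool) (hpn : prefixNormal w)
    (h0 : false ∈ w) (hext : prefixNormal (w ++ [true])) :
    ∃ i : Fin w.length, w.get i = false ∧
      prefixNormal (w.set i true) ∧ prefixNormal (w.set i true ++ [true]) := by
  set i := List.idxOf false w with hi
  have hlen : i < w.length := List.idxOf_lt_length_iff.2 h0
  have hwi : w[i] = false := List.idxOf_get hlen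
  set W := w ++ [true] with hW
  have hWlen : W.length = w.length + 1 := by simp [hW]
  have Wget : ∀ n, (hn : n < w.length) → W[n]'(by omega) = w[n] := by
    intro n hn
    exact List.getElem_append_left hn
  have hWi : W[i]'(by omega) = false := (Wget i hlen).trans hwi
  -- key : the extended flipped word is prefix normal
  have key : prefixNormal (W.set i true) := by
    intro u hu
    obtain ⟨u', hu', hlen', hcount⟩ := infix_set_count W u i hu
    have hul : u.length ≤ W.length := by
      have := hu.length_le; simpa using this
    by_cases hc : u.length ≤ i
    · -- the prefix of the same length is all ones
      have hall : ((W.set i true).take u.length).count true = u.length := by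
        rw [List.count_eq_length.2 ?_, List.length_take, List.length_set]
        · omega
        · intro b hb
          obtain ⟨n, hn, hnb⟩ := List.mem_iff_getElem.1 hb
          rw [List.getElem_take] at hnb
          have hn' : n < u.length := by
            simp [List.length_take] at hn
            omega
          have hni : n ≠ i := by omega
          rw [List.getElem_set_of_ne (by omega)] at hnb
          have hWn : W[n]'(by omega) = true := by
            rw [Wget n (by omega)]
            have h5 : n < List.idxOf false w := lt_of_lt_of_le hn' hc
            have := List.not_of_lt_findIdx (xs := w) (i := n) h5
            simpa using this
          rw [← hnb, hWn]
      rw [hall]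
      exact List.count_le_length
    · -- the prefix contains position i, so its 1-count went up by one
      push_neg at hc
      have heq : ((W.set i true).take u.length).count true
          = (W.take u.length).count true + 1 := by
        rw [List.take_set]
        refine count_set_false _ _ ?_ ?_
        · simp [List.length_take]
          omega
        · rw [List.getElem_take]
          exact hWi
      rw [heq]
      have h3 := hext u' hu'
      rw [hlen'] at h3
      omega
  have hset : W.set i true = w.set i true ++ [true] := by
    simp [hW, List.set_append, hlen]
  rw [hset] at key
  exact ⟨⟨i, hlen⟩, hwi, prefixNormal_of_append _ _ key, key⟩
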